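/- Let λ ∈ ℂ with λ ≠ 0 and |Re(λ)| < π/4, let w(z) := sech(πz/4), and define h(z) := e^{λz}·w(z) − (π/8)·(∫_ℝ w(s)²·e^{λs} ds)·w(z). Then h is not identically zero, h ∈ L²(ℝ), h' ∈ L²(ℝ), and for every z ∈ ℝ one has h'(z) + (π/4)·tanh(πz/4)·h(z) + (π/4)·w(z)·∫_ℝ w'(s)·h(s) ds = λ·h(z). In particular every λ in the open strip {0 < |Re λ| < π/4} is an eigenvalue of the operator D₀. -/

import Mathlib

open Real MeasureTheory Filter Set

/-- The weight `w(z) = sech(πz/4)`. -/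
noncomputable def w (z : ℝ) : ℝ := 1 / Real.cosh (π * z / 4)

/-- The eigenfunction candidate `h(z) = e^{λz}w(z) − (π/8)(∫ w²e^{λs} ds)w(z)`. -/
noncomputable def hfun (lam : ℂ) (z : ℝ) : ℂ :=
  Complex.exp (lam * z) * (w z : ℂ)
    - ((π / 8 : ℝ) : ℂ) * (∫ s : ℝ, ((w s : ℂ)) ^ 2 * Complex.exp (lam * s)) * (w z : ℂ)


lemma w_eq (z : ℝ) : w z = (Real.cosh (π * z / 4))⁻¹ := one_div _

lemma w_pos (z : ℝ) : 0 < w z := by rw [w_eq]; positivity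

lemma w_even (z : ℝ) : w (-z) = w z := by
  simp [w, mul_neg, neg_div, Real.cosh_neg]

lemma continuous_w : Continuous w :=
  continuous_const.div (Real.continuous_cosh.comp (by continuity))
    fun z => (Real.cosh_pos (x := π * z / 4)).ne'

lemma w_le (z : ℝ) : w z ≤ 2 * Real.exp (-(π / 4 * |z|)) := by
  have habs : |π * z / 4| = π / 4 * |z| := by
    rw [abs_div, abs_mul, abs_of_pos Real.pi_pos]
    ring_nf
  have h : Real.exp (π / 4 * |z|) / 2 ≤ Real.cosh (π * z / 4) := by
    rw [Real.cosh_eq, ← habs]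
    rcases abs_cases (π * z / 4) with ⟨h1, _⟩ | ⟨h1, _⟩ <;> rw [h1] <;>
      nlinarith [Real.exp_pos (π * z / 4), Real.exp_pos (-(π * z / 4))]
  rw [w_eq]
  have h2 : 0 < Real.exp (π / 4 * |z|) / 2 := by positivity
  calc (Real.cosh (π * z / 4))⁻¹ ≤ (Real.exp (π / 4 * |z|) / 2)⁻¹ := by
        exact inv_anti₀ h2 h
    _ = 2 * Real.exp (-(π / 4 * |z|)) := by
        rw [Real.exp_neg]; field_simp

lemma abs_tanh_le_one (x : ℝ) : |Real.tanh x| ≤ 1 := by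
  have h1 := Real.cosh_add_sinh x
  have h2 := Real.cosh_sub_sinh x
  have h3 := Real.exp_pos x
  have h4 := Real.exp_pos (-x)
  have h5 := Real.cosh_pos (x := x)
  rw [Real.tanh_eq_sinh_div_cosh, abs_div, abs_of_pos h5, div_le_one h5, abs_le]
  constructor <;> nlinarith

lemma hasDerivAt_w (z : ℝ) :
    HasDerivAt w (-(π / 4 * Real.tanh (π * z / 4)) * w z) z := by
  have h1 : HasDerivAt (fun z : ℝ => π * z / 4) (π / 4) z := by
    simpa using ((hasDerivAt_id z).const_mul π).div_const 4
  have h2 : HasDerivAt (fun z : ℝ => Real.cosh (π * z / 4))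
      (Real.sinh (π * z / 4) * (π / 4)) z := (Real.hasDerivAt_cosh _).comp z h1
  have h3 : HasDerivAt (fun z : ℝ => (Real.cosh (π * z / 4))⁻¹) _ z :=
    h2.inv (Real.cosh_pos (x := π * z / 4)).ne'
  have hw : w = fun z => (Real.cosh (π * z / 4))⁻¹ := funext w_eq
  rw [hw]
  convert h3 using 1
  simp only [Real.tanh_eq_sinh_div_cosh]
  have := (Real.cosh_pos (x := π * z / 4)).ne'
  field_simp

lemma deriv_w (z : ℝ) : deriv w z = -(π / 4 * Real.tanh (π * z / 4)) * w z :=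
  (hasDerivAt_w z).deriv

lemma abs_deriv_w_le (z : ℝ) : |deriv w z| ≤ π / 4 * w z := by
  rw [deriv_w, abs_mul, abs_neg, abs_mul, abs_of_pos (w_pos z),
    abs_of_pos (by positivity : (0:ℝ) < π / 4)]
  have h1 := abs_tanh_le_one (π * z / 4)
  have h2 := (w_pos z).le
  nlinarith [mul_le_mul_of_nonneg_right h1 h2, abs_nonneg (Real.tanh (π * z / 4)), Real.pi_pos]

lemma continuous_deriv_w : Continuous (deriv w) := by
  have : deriv w = fun z => -(π / 4 * Real.tanh (π * z / 4)) * w z := funext deriv_w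
  rw [this]
  have ht : Continuous fun z : ℝ => Real.tanh (π * z / 4) := by
    have : (fun z : ℝ => Real.tanh (π * z / 4))
        = fun z : ℝ => Real.sinh (π * z / 4) / Real.cosh (π * z / 4) :=
      funext fun z => Real.tanh_eq_sinh_div_cosh _
    rw [this]
    exact (Real.continuous_sinh.comp (by continuity)).div
      (Real.continuous_cosh.comp (by continuity))
      fun z => (Real.cosh_pos (x := π * z / 4)).ne'
  exact ((continuous_const.mul ht).neg).mul continuous_w

lemma continuous_aux (a : ℝ) : Continuous (fun s => Real.exp (a * s) * w s ^ 2) :=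
  (Real.continuous_exp.comp (continuous_const.mul continuous_id)).mul (continuous_w.pow 2)

lemma exp_sq (x : ℝ) : Real.exp x ^ 2 = Real.exp (2 * x) := by
  rw [sq, ← Real.exp_add]; ring_nf

lemma bound_aux {a s : ℝ} (hs : 0 ≤ s) :
    Real.exp (a * s) * w s ^ 2 ≤ 4 * Real.exp ((a - π / 2) * s) := by
  have h1 : w s ≤ 2 * Real.exp (-(π / 4 * s)) := by
    simpa [abs_of_nonneg hs] using w_le s
  have h2 : w s ^ 2 ≤ 4 * Real.exp (-(π / 4 * s)) ^ 2 := by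
    nlinarith [(w_pos s).le, Real.exp_pos (-(π / 4 * s))]
  have h3 : Real.exp (a * s) * w s ^ 2 ≤ Real.exp (a * s) * (4 * Real.exp (-(π / 4 * s)) ^ 2) :=
    mul_le_mul_of_nonneg_left h2 (Real.exp_pos _).le
  calc Real.exp (a * s) * w s ^ 2 ≤ Real.exp (a * s) * (4 * Real.exp (-(π / 4 * s)) ^ 2) := h3
    _ = 4 * Real.exp ((a - π / 2) * s) := by
        rw [exp_sq]
        rw [show rexp (a * s) * (4 * rexp (2 * -(π / 4 * s))) = 4 * (rexp (a*s) * rexp (2 * -(π / 4 * s))) by ring, ← Real.exp_add]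
        ring_nf

lemma integrableOn_Ioi_aux {a : ℝ} (ha : a < π / 2) :
    IntegrableOn (fun s => Real.exp (a * s) * w s ^ 2) (Ioi 0) := by
  have hb : 0 < π / 2 - a := by linarith
  have hm : IntegrableOn (fun s => 4 * Real.exp (-(π / 2 - a) * s)) (Ioi 0) :=
    (exp_neg_integrableOn_Ioi 0 hb).const_mul 4
  refine hm.mono' ((continuous_aux a).aestronglyMeasurable.restrict) ?_
  refine (ae_restrict_iff' measurableSet_Ioi).2 (ae_of_all _ fun s hs => ?_)
  have hs' : (0:ℝ) ≤ s := (le_of_lt hs)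
  rw [Real.norm_eq_abs, abs_of_nonneg (by positivity)]
  have := bound_aux (a := a) hs'
  calc Real.exp (a * s) * w s ^ 2 ≤ 4 * Real.exp ((a - π / 2) * s) := this
    _ = 4 * Real.exp (-(π / 2 - a) * s) := by ring_nf

lemma integrable_aux {a : ℝ} (ha : |a| < π / 2) :
    Integrable (fun s => Real.exp (a * s) * w s ^ 2) := by
  obtain ⟨h1, h2⟩ := abs_lt.1 ha
  have hIoi := integrableOn_Ioi_aux h2
  have hIic : IntegrableOn (fun s => Real.exp (a * s) * w s ^ 2) (Iic 0) := by
    have hIoi' := integrableOn_Ioi_aux (a := -a) (by linarith)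
    have A : MeasurableEmbedding fun x : ℝ => -x :=
      (Homeomorph.neg ℝ).isClosedEmbedding.measurableEmbedding
    have hmap : volume.restrict (Iic (0:ℝ))
        = Measure.map (fun x : ℝ => -x) (volume.restrict (Ici (0:ℝ))) := by
      rw [show volume.restrict (Iic (0:ℝ))
          = (Measure.map (fun x : ℝ => -x) volume).restrict (Iic 0) by
        rw [Measure.map_neg_eq_self]]
      rw [Measure.restrict_map A.measurable measurableSet_Iic]
      congr 1
      ext x
      simp
    rw [IntegrableOn, hmap, A.integrable_map_iff]
    have : ((fun s => Real.exp (a * s) * w s ^ 2) ∘ fun x : ℝ => -x)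
        = fun s => Real.exp (-a * s) * w s ^ 2 := by
      funext s
      have : w (-s) = w s := w_even s
      simp only [Function.comp, mul_neg, neg_mul, this]
    rw [this, ← IntegrableOn, integrableOn_Ici_iff_integrableOn_Ioi]
    exact hIoi'
  rw [← integrableOn_univ, ← Set.Iic_union_Ioi (a := (0:ℝ))]
  exact hIic.union hIoi

lemma tendsto_aux_top {a : ℝ} (ha : a < π / 2) :
    Tendsto (fun s => Real.exp (a * s) * w s ^ 2) atTop (nhds 0) := by
  have hlim : Tendsto (fun s : ℝ => 4 * Real.exp ((a - π / 2) * s)) atTop (nhds 0) := by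
    have h1 : Tendsto (fun s : ℝ => (a - π / 2) * s) atTop atBot :=
      (tendsto_const_mul_atBot_of_neg (by linarith)).2 tendsto_id
    simpa using (Real.tendsto_exp_atBot.comp h1).const_mul 4
  apply squeeze_zero_norm' _ hlim
  filter_upwards [eventually_ge_atTop (0:ℝ)] with s hs
  rw [Real.norm_eq_abs, abs_of_nonneg (by positivity)]
  exact bound_aux hs

lemma tendsto_aux_bot {a : ℝ} (ha : -(π / 2) < a) :
    Tendsto (fun s => Real.exp (a * s) * w s ^ 2) atBot (nhds 0) := by
  have hlim : Tendsto (fun s : ℝ => 4 * Real.exp ((a + π / 2) * s)) atBot (nhds 0) := by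
    have h1 : Tendsto (fun s : ℝ => (a + π / 2) * s) atBot atBot :=
      (tendsto_const_mul_atBot_of_pos (by linarith)).2 tendsto_id
    simpa using (Real.tendsto_exp_atBot.comp h1).const_mul 4
  apply squeeze_zero_norm' _ hlim
  filter_upwards [eventually_le_atBot (0:ℝ)] with s hs
  rw [Real.norm_eq_abs, abs_of_nonneg (by positivity)]
  -- bound for s ≤ 0
  have h1 : w s ≤ 2 * Real.exp (-(π / 4 * (-s))) := by
    simpa [abs_of_nonpos hs] using w_le s
  have h2 : w s ^ 2 ≤ 4 * Real.exp (-(π / 4 * (-s))) ^ 2 := by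
    nlinarith [(w_pos s).le, Real.exp_pos (-(π / 4 * (-s)))]
  have h3 : Real.exp (a * s) * w s ^ 2
      ≤ Real.exp (a * s) * (4 * Real.exp (-(π / 4 * (-s))) ^ 2) :=
    mul_le_mul_of_nonneg_left h2 (Real.exp_pos _).le
  calc Real.exp (a * s) * w s ^ 2
      ≤ Real.exp (a * s) * (4 * Real.exp (-(π / 4 * (-s))) ^ 2) := h3
    _ = 4 * Real.exp ((a + π / 2) * s) := by
        rw [exp_sq]
        rw [show Real.exp (a * s) * (4 * Real.exp (2 * -(π / 4 * (-s))))
            = 4 * (Real.exp (a * s) * Real.exp (2 * -(π / 4 * (-s)))) by ring, ← Real.exp_add]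
        ring_nf

lemma re_mul_ofReal (lam : ℂ) (s : ℝ) : (lam * (s:ℂ)).re = lam.re * s := by
  simp [Complex.mul_re]

lemma norm_wsq_exp (lam : ℂ) (s : ℝ) :
    ‖(w s : ℂ) ^ 2 * Complex.exp (lam * s)‖ = Real.exp (lam.re * s) * w s ^ 2 := by
  rw [norm_mul, norm_pow, Complex.norm_real, Real.norm_eq_abs, abs_of_pos (w_pos s),
    Complex.norm_exp, re_mul_ofReal]
  ring

lemma continuous_cexp (lam : ℂ) : Continuous fun s : ℝ => Complex.exp (lam * s) :=
  Complex.continuous_exp.comp (continuous_const.mul Complex.continuous_ofReal)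

lemma continuous_wC : Continuous fun s : ℝ => (w s : ℂ) :=
  Complex.continuous_ofReal.comp continuous_w

lemma integrable_wsq_exp {lam : ℂ} (hre : |lam.re| < π / 2) :
    Integrable (fun s : ℝ => (w s : ℂ) ^ 2 * Complex.exp (lam * s)) := by
  have hc : Continuous fun s : ℝ => (w s : ℂ) ^ 2 * Complex.exp (lam * s) :=
    (continuous_wC.pow 2).mul (continuous_cexp lam)
  rw [← integrable_norm_iff hc.aestronglyMeasurable]
  have : (fun s : ℝ => ‖(w s : ℂ) ^ 2 * Complex.exp (lam * s)‖)
      = fun s => Real.exp (lam.re * s) * w s ^ 2 := funext (norm_wsq_exp lam)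
  rw [this]
  exact integrable_aux hre

lemma integrable_w_dw_exp {lam : ℂ} (hre : |lam.re| < π / 2) :
    Integrable (fun s : ℝ => (w s : ℂ) * ((deriv w s : ℝ) : ℂ) * Complex.exp (lam * s)) := by
  have hc : Continuous fun s : ℝ => (w s : ℂ) * ((deriv w s : ℝ) : ℂ) * Complex.exp (lam * s) :=
    (continuous_wC.mul (Complex.continuous_ofReal.comp continuous_deriv_w)).mul
      (continuous_cexp lam)
  refine ((integrable_aux hre).const_mul (π / 4)).mono' hc.aestronglyMeasurable
    (ae_of_all _ fun s => ?_)
  rw [norm_mul, norm_mul, Complex.norm_real, Complex.norm_real, Real.norm_eq_abs,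
    Real.norm_eq_abs, abs_of_pos (w_pos s), Complex.norm_exp, re_mul_ofReal]
  have h1 := abs_deriv_w_le s
  have h2 := (w_pos s).le
  have h3 := (Real.exp_pos (lam.re * s)).le
  have h4 := abs_nonneg (deriv w s)
  nlinarith [mul_le_mul_of_nonneg_left h1 h2, sq_nonneg (w s)]

lemma hasDerivAt_wC (s : ℝ) :
    HasDerivAt (fun s : ℝ => (w s : ℂ)) ((deriv w s : ℝ) : ℂ) s :=
  (hasDerivAt_w s).ofReal_comp.congr_deriv (by rw [deriv_w])

lemma hasDerivAt_cexp (lam : ℂ) (s : ℝ) :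
    HasDerivAt (fun s : ℝ => Complex.exp (lam * s)) (lam * Complex.exp (lam * s)) s := by
  have h1 : HasDerivAt (fun z : ℂ => lam * z) lam (s : ℂ) := by
    simpa using (hasDerivAt_id (s : ℂ)).const_mul lam
  have h2 := h1.cexp
  simpa [mul_comm] using h2.comp_ofReal

lemma hasDerivAt_F (lam : ℂ) (s : ℝ) :
    HasDerivAt (fun s : ℝ => (w s : ℂ) ^ 2 * Complex.exp (lam * s))
      (2 * (w s : ℂ) * ((deriv w s : ℝ) : ℂ) * Complex.exp (lam * s)
        + lam * ((w s : ℂ) ^ 2 * Complex.exp (lam * s))) s := by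
  have heq : (fun s : ℝ => (w s : ℂ) ^ 2 * Complex.exp (lam * s))
      = fun s : ℝ => ((w s : ℂ) * (w s : ℂ)) * Complex.exp (lam * s) := by
    funext s; ring
  rw [heq]
  have h1 : HasDerivAt (fun s : ℝ => ((w s : ℂ) * (w s : ℂ)) * Complex.exp (lam * s))
      ((((deriv w s : ℝ) : ℂ) * (w s : ℂ) + (w s : ℂ) * ((deriv w s : ℝ) : ℂ)) * Complex.exp (lam * s)
        + ((w s : ℂ) * (w s : ℂ)) * (lam * Complex.exp (lam * s))) s :=
    ((hasDerivAt_wC s).mul (hasDerivAt_wC s)).mul (hasDerivAt_cexp lam s)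
  convert h1 using 1
  ring

lemma tendsto_F_top {lam : ℂ} (hre : |lam.re| < π / 2) :
    Tendsto (fun s : ℝ => (w s : ℂ) ^ 2 * Complex.exp (lam * s)) atTop (nhds 0) := by
  apply squeeze_zero_norm (fun s => (norm_wsq_exp lam s).le)
  exact tendsto_aux_top (abs_lt.1 hre).2

lemma tendsto_F_bot {lam : ℂ} (hre : |lam.re| < π / 2) :
    Tendsto (fun s : ℝ => (w s : ℂ) ^ 2 * Complex.exp (lam * s)) atBot (nhds 0) := by
  apply squeeze_zero_norm (fun s => (norm_wsq_exp lam s).le)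
  exact tendsto_aux_bot (abs_lt.1 hre).1

lemma integral_deriv_F_zero {lam : ℂ} (hre : |lam.re| < π / 2) :
    ∫ s : ℝ, (2 * (w s : ℂ) * ((deriv w s : ℝ) : ℂ) * Complex.exp (lam * s)
      + lam * ((w s : ℂ) ^ 2 * Complex.exp (lam * s))) = 0 := by
  set F : ℝ → ℂ := fun s => (w s : ℂ) ^ 2 * Complex.exp (lam * s) with hF
  set F' : ℝ → ℂ := fun s =>
    2 * (w s : ℂ) * ((deriv w s : ℝ) : ℂ) * Complex.exp (lam * s) + lam * F s with hF'
  have hint : Integrable F' := by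
    apply Integrable.add
    · simpa [mul_comm, mul_assoc, mul_left_comm] using (integrable_w_dw_exp hre).const_mul 2
    · exact (integrable_wsq_exp hre).const_mul lam
  have hIic : ∫ s in Iic (0:ℝ), F' s = F 0 - 0 :=
    integral_Iic_of_hasDerivAt_of_tendsto' (fun x _ => hasDerivAt_F lam x)
      hint.integrableOn (tendsto_F_bot hre)
  have hIoi : ∫ s in Ioi (0:ℝ), F' s = 0 - F 0 :=
    integral_Ioi_of_hasDerivAt_of_tendsto' (fun x _ => hasDerivAt_F lam x)
      hint.integrableOn (tendsto_F_top hre)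
  have := intervalIntegral.integral_Iic_add_Ioi (b := (0:ℝ)) hint.integrableOn hint.integrableOn
  rw [hIic, hIoi] at this
  rw [← this]
  ring

lemma key {lam : ℂ} (hre : |lam.re| < π / 2) :
    ∫ s : ℝ, (w s : ℂ) * ((deriv w s : ℝ) : ℂ) * Complex.exp (lam * s)
      = -(lam / 2) * ∫ s : ℝ, (w s : ℂ) ^ 2 * Complex.exp (lam * s) := by
  have h0 := integral_deriv_F_zero hre
  rw [integral_add
      (by simpa [mul_comm, mul_assoc, mul_left_comm] using (integrable_w_dw_exp hre).const_mul 2)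
      ((integrable_wsq_exp hre).const_mul lam)] at h0
  have h1 : ∫ s : ℝ, 2 * (w s : ℂ) * ((deriv w s : ℝ) : ℂ) * Complex.exp (lam * s)
      = 2 * ∫ s : ℝ, (w s : ℂ) * ((deriv w s : ℝ) : ℂ) * Complex.exp (lam * s) := by
    rw [← integral_const_mul]
    congr 1; funext s; ring
  have h2 : ∫ s : ℝ, lam * ((w s : ℂ) ^ 2 * Complex.exp (lam * s))
      = lam * ∫ s : ℝ, (w s : ℂ) ^ 2 * Complex.exp (lam * s) := integral_const_mul _ _
  rw [h1, h2] at h0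
  linear_combination (1/2 : ℂ) * h0

noncomputable def Kv (lam : ℂ) : ℂ :=
  ((π / 8 : ℝ) : ℂ) * ∫ s : ℝ, ((w s : ℂ)) ^ 2 * Complex.exp (lam * s)

lemma hfun_eq (lam : ℂ) (z : ℝ) :
    hfun lam z = (Complex.exp (lam * z) - Kv lam) * (w z : ℂ) := by
  simp only [hfun, Kv]; ring

lemma integrable_w_dw : Integrable (fun s : ℝ => (w s : ℂ) * ((deriv w s : ℝ) : ℂ)) := by
  have h := integrable_w_dw_exp (lam := 0) (by simpa using (by positivity : (0:ℝ) < π / 2))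
  simpa using h

lemma int_w_dw_zero : ∫ s : ℝ, (w s : ℂ) * ((deriv w s : ℝ) : ℂ) = 0 := by
  have h := key (lam := 0) (by simpa using (by positivity : (0:ℝ) < π / 2))
  simpa using h

lemma Jval {lam : ℂ} (hre : |lam.re| < π / 2) :
    ∫ s : ℝ, ((deriv w s : ℝ) : ℂ) * hfun lam s
      = -(lam / 2) * ∫ s : ℝ, (w s : ℂ) ^ 2 * Complex.exp (lam * s) := by
  have heq : (fun s : ℝ => ((deriv w s : ℝ) : ℂ) * hfun lam s)
      = fun s => (w s : ℂ) * ((deriv w s : ℝ) : ℂ) * Complex.exp (lam * s)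
          - Kv lam * ((w s : ℂ) * ((deriv w s : ℝ) : ℂ)) := by
    funext s; rw [hfun_eq]; ring
  rw [heq, integral_sub (integrable_w_dw_exp hre) (integrable_w_dw.const_mul (Kv lam)),
    integral_const_mul, int_w_dw_zero, mul_zero, sub_zero, key hre]

lemma hasDerivAt_hfun (lam : ℂ) (z : ℝ) :
    HasDerivAt (hfun lam)
      (lam * Complex.exp (lam * z) * (w z : ℂ)
        + (Complex.exp (lam * z) - Kv lam) * ((deriv w z : ℝ) : ℂ)) z := by
  have hfe : hfun lam = fun z : ℝ => (Complex.exp (lam * z) - Kv lam) * (w z : ℂ) :=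
    funext (hfun_eq lam)
  rw [hfe]
  have h1 : HasDerivAt (fun z : ℝ => Complex.exp (lam * z) - Kv lam)
      (lam * Complex.exp (lam * z)) z := (hasDerivAt_cexp lam z).sub_const _
  exact h1.mul (hasDerivAt_wC z)

lemma deriv_hfun (lam : ℂ) (z : ℝ) :
    deriv (hfun lam) z = lam * Complex.exp (lam * z) * (w z : ℂ)
        + (Complex.exp (lam * z) - Kv lam) * ((deriv w z : ℝ) : ℂ) :=
  (hasDerivAt_hfun lam z).deriv

lemma continuous_hfun (lam : ℂ) : Continuous (hfun lam) := by
  have hfe : hfun lam = fun z : ℝ => (Complex.exp (lam * z) - Kv lam) * (w z : ℂ) :=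
    funext (hfun_eq lam)
  rw [hfe]
  exact ((continuous_cexp lam).sub continuous_const).mul continuous_wC

lemma norm_hfun_le (lam : ℂ) (z : ℝ) :
    ‖hfun lam z‖ ≤ (Real.exp (lam.re * z) + ‖Kv lam‖) * w z := by
  rw [hfun_eq, norm_mul, Complex.norm_real, Real.norm_eq_abs, abs_of_pos (w_pos z)]
  refine mul_le_mul_of_nonneg_right ?_ (w_pos z).le
  calc ‖Complex.exp (lam * z) - Kv lam‖ ≤ ‖Complex.exp (lam * z)‖ + ‖Kv lam‖ := norm_sub_le _ _
    _ = Real.exp (lam.re * z) + ‖Kv lam‖ := by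
        rw [Complex.norm_exp, re_mul_ofReal]

lemma memLp_hfun {lam : ℂ} (hre : |lam.re| < π / 4) : MemLp (hfun lam) 2 volume := by
  rw [memLp_two_iff_integrable_sq_norm (continuous_hfun lam).aestronglyMeasurable]
  have h2a : |2 * lam.re| < π / 2 := by
    rw [abs_mul, abs_two]; linarith
  have h0 : |(0:ℝ)| < π / 2 := by simpa using (by positivity : (0:ℝ) < π / 2)
  have hg : Integrable (fun z : ℝ =>
      2 * (Real.exp (2 * lam.re * z) * w z ^ 2)
        + (2 * ‖Kv lam‖ ^ 2) * (Real.exp (0 * z) * w z ^ 2)) :=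
    ((integrable_aux h2a).const_mul 2).add ((integrable_aux h0).const_mul _)
  refine hg.mono' (((continuous_hfun lam).norm.pow 2).aestronglyMeasurable)
    (ae_of_all _ fun z => ?_)
  rw [Real.norm_eq_abs, abs_of_nonneg (by positivity)]
  have hb := norm_hfun_le lam z
  have he : Real.exp (lam.re * z) ^ 2 = Real.exp (2 * lam.re * z) := by
    rw [exp_sq]; ring_nf
  have he0 : Real.exp (0 * z) = 1 := by simp
  have hw := (w_pos z).le
  have hn := norm_nonneg (hfun lam z)
  have hE := (Real.exp_pos (lam.re * z)).le
  have hK := norm_nonneg (Kv lam)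
  rw [he0, ← he]
  nlinarith [mul_self_le_mul_self hn hb,
    sq_nonneg ((Real.exp (lam.re * z) - ‖Kv lam‖) * w z), sq_nonneg (w z),
    mul_nonneg (mul_nonneg hE hE) (mul_nonneg hw hw)]

lemma norm_deriv_hfun_le (lam : ℂ) (z : ℝ) :
    ‖deriv (hfun lam) z‖
      ≤ (‖lam‖ + π / 4) * (Real.exp (lam.re * z) * w z) + (π / 4 * ‖Kv lam‖) * w z := by
  rw [deriv_hfun]
  have h1 : ‖lam * Complex.exp (lam * z) * (w z : ℂ)‖
      = ‖lam‖ * (Real.exp (lam.re * z) * w z) := by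
    simp only [norm_mul, Complex.norm_real, Real.norm_eq_abs, 
      Complex.norm_exp, re_mul_ofReal, Complex.norm_real, abs_of_pos (w_pos z)]
    ring
  have h2 : ‖(Complex.exp (lam * z) - Kv lam) * ((deriv w z : ℝ) : ℂ)‖
      ≤ (Real.exp (lam.re * z) + ‖Kv lam‖) * (π / 4 * w z) := by
    rw [norm_mul, Complex.norm_real, Real.norm_eq_abs]
    have hd := abs_deriv_w_le z
    have : ‖Complex.exp (lam * z) - Kv lam‖ ≤ Real.exp (lam.re * z) + ‖Kv lam‖ := by
      calc ‖Complex.exp (lam * z) - Kv lam‖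
          ≤ ‖Complex.exp (lam * z)‖ + ‖Kv lam‖ := norm_sub_le _ _
        _ = Real.exp (lam.re * z) + ‖Kv lam‖ := by
            rw [Complex.norm_exp, re_mul_ofReal]
    exact mul_le_mul this hd (abs_nonneg _) (by positivity)
  refine le_trans (norm_add_le _ _) ?_
  rw [h1]
  refine le_trans (add_le_add_right h2 _) (le_of_eq ?_)
  ring

lemma continuous_deriv_hfun (lam : ℂ) : Continuous (deriv (hfun lam)) := by
  have : deriv (hfun lam) = fun z : ℝ => lam * Complex.exp (lam * z) * (w z : ℂ)
      + (Complex.exp (lam * z) - Kv lam) * ((deriv w z : ℝ) : ℂ) := funext (deriv_hfun lam)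
  rw [this]
  exact ((continuous_const.mul (continuous_cexp lam)).mul continuous_wC).add
    (((continuous_cexp lam).sub continuous_const).mul
      (Complex.continuous_ofReal.comp continuous_deriv_w))

lemma memLp_deriv_hfun {lam : ℂ} (hre : |lam.re| < π / 4) :
    MemLp (deriv (hfun lam)) 2 volume := by
  rw [memLp_two_iff_integrable_sq_norm (continuous_deriv_hfun lam).aestronglyMeasurable]
  have h2a : |2 * lam.re| < π / 2 := by
    rw [abs_mul, abs_two]; linarith
  have h0 : |(0:ℝ)| < π / 2 := by simpa using (by positivity : (0:ℝ) < π / 2)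
  have hg : Integrable (fun z : ℝ =>
      (2 * (‖lam‖ + π / 4) ^ 2) * (Real.exp (2 * lam.re * z) * w z ^ 2)
        + (2 * (π / 4 * ‖Kv lam‖) ^ 2) * (Real.exp (0 * z) * w z ^ 2)) :=
    ((integrable_aux h2a).const_mul _).add ((integrable_aux h0).const_mul _)
  refine hg.mono' (((continuous_deriv_hfun lam).norm.pow 2).aestronglyMeasurable)
    (ae_of_all _ fun z => ?_)
  rw [Real.norm_eq_abs, abs_of_nonneg (by positivity)]
  have hb := norm_deriv_hfun_le lam z
  have he : Real.exp (lam.re * z) ^ 2 = Real.exp (2 * lam.re * z) := by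
    rw [exp_sq]; ring_nf
  have he0 : Real.exp (0 * z) = 1 := by simp
  have hw := (w_pos z).le
  have hn := norm_nonneg (deriv (hfun lam) z)
  have hE := (Real.exp_pos (lam.re * z)).le
  have hK := norm_nonneg (Kv lam)
  have hL := norm_nonneg lam
  have hpi := Real.pi_pos
  rw [he0, ← he]
  nlinarith [mul_self_le_mul_self hn hb,
    sq_nonneg ((‖lam‖ + π / 4) * (Real.exp (lam.re * z) * w z) - (π / 4 * ‖Kv lam‖) * w z),
    sq_nonneg (w z), mul_nonneg (mul_nonneg hE hE) (mul_nonneg hw hw)]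

lemma exists_hfun_ne {lam : ℂ} (hlam : lam ≠ 0) : ∃ z : ℝ, hfun lam z ≠ 0 := by
  by_contra h
  push_neg at h
  have hexp : ∀ z : ℝ, Complex.exp (lam * z) = Kv lam := by
    intro z
    have hz := h z
    rw [hfun_eq] at hz
    rcases mul_eq_zero.1 hz with h1 | h2
    · exact sub_eq_zero.1 h1
    · exact absurd h2 (Complex.ofReal_ne_zero.2 (w_pos z).ne')
  have hK1 : Kv lam = 1 := by
    have := hexp 0
    simpa using this.symm
  have hconst : (fun z : ℝ => Complex.exp (lam * z)) = fun _ => (1 : ℂ) :=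
    funext fun z => by rw [hexp z, hK1]
  have hd := hasDerivAt_cexp lam 0
  rw [hconst] at hd
  have h0 := hd.unique (hasDerivAt_const 0 1)
  simp [Complex.exp_ne_zero] at h0
  exact hlam h0


/-- Every `λ ≠ 0` in the open strip `|Re λ| < π/4` is an eigenvalue of the operator
`D₀h = h' + (π/4)tanh(πz/4)h + (π/4)w⟨w',h⟩`, with eigenfunction
`h(z) = e^{λz}w(z) − (π/8)⟨w², e^{λ·}⟩w(z)` belonging to `H¹(ℝ)`. -/
theorem strip_point_spectrum (lam : ℂ) (hlam : lam ≠ 0) (hre : |lam.re| < π / 4) :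
    (∃ z : ℝ, hfun lam z ≠ 0) ∧
    MemLp (hfun lam) 2 volume ∧
    MemLp (deriv (hfun lam)) 2 volume ∧
    ∀ z : ℝ, deriv (hfun lam) z
        + ((π / 4 * Real.tanh (π * z / 4) : ℝ) : ℂ) * hfun lam z
        + ((π / 4 * w z : ℝ) : ℂ) * ∫ s : ℝ, ((deriv w s : ℝ) : ℂ) * hfun lam s
      = lam * hfun lam z := by
  have hre' : |lam.re| < π / 2 := by linarith [Real.pi_pos]
  refine ⟨exists_hfun_ne hlam, memLp_hfun hre, memLp_deriv_hfun hre, fun z => ?_⟩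
  rw [deriv_hfun, Jval hre', hfun_eq, deriv_w z, Kv]
  push_cast
  ring
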